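/- For every δ ∈ [0,1) there exists a constant C > 0 such that the following holds. Let Z₁ and Z₂ be independent standard normal random variables on a probability space, let ρ ∈ [−δ, δ], and set W₁ = Z₁ and W₂ = ρ Z₁ + √(1 − ρ²) Z₂. Then for all t ≥ 0: P( |W₁| ≥ t and |W₂| ≥ t ) ≤ C (1 + t)^{−2} exp( −t² / (1 + δ) ). -/

import Mathlib

open MeasureTheory ProbabilityTheory
open scoped ENNReal

section Aux
open Real Set Filter

set_option maxHeartbeats 1000000



lemma claimA (δ t s : ℝ) (hδ0 : 0 ≤ δ) (hδ1 : δ < 1) (ht : 1 ≤ t) (hs : t ≤ s) :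
    Real.exp (-(s^2)/2) * (4 * Real.exp (-(max ((t - δ*s)/Real.sqrt (1-δ^2)) 0)^2/2) /
      (1 + max ((t - δ*s)/Real.sqrt (1-δ^2)) 0))
    ≤ 64/(1-δ)^2/(1+t) * (Real.exp (-(t^2)/(1+δ)) * Real.exp (-((s-t)*(t/2)))) := by
  have hd1 : (0:ℝ) < 1 + δ := by linarith
  have h1d : (0:ℝ) < 1 - δ := by linarith
  have hc2' : (0:ℝ) < 1 - δ^2 := by nlinarith
  obtain ⟨c, hcdef⟩ : ∃ c, c = Real.sqrt (1-δ^2) := ⟨_, rfl⟩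
  rw [← hcdef]
  have hc2 : c^2 = 1-δ^2 := by rw [hcdef]; exact Real.sq_sqrt hc2'.le
  have hcpos : 0 < c := by rw [hcdef]; exact Real.sqrt_pos.2 hc2'
  have hcle1 : c ≤ 1 := by rw [hcdef]; exact Real.sqrt_le_one.2 (by nlinarith)
  clear hcdef
  obtain ⟨v, hvdef⟩ : ∃ v, v = max ((t - δ*s)/c) 0 := ⟨_, rfl⟩
  rw [← hvdef]
  have hv0 : 0 ≤ v := hvdef ▸ le_max_right _ _
  have h1v : (0:ℝ) < 1 + v := by linarith
  have ht0 : (0:ℝ) < t := by linarith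
  have hrhs : Real.exp (-(t^2)/(1+δ)) * Real.exp (-((s-t)*(t/2)))
      = Real.exp (-(t^2/(1+δ)) - (s-t)*(t/2)) := by
    rw [← Real.exp_add]; ring_nf
  rcases le_or_gt (2*δ*s) ((1+δ)*t) with hcase | hcase
  · -- case i
    have hw : (1-δ)*t/2 ≤ t - δ*s := by linarith
    have hw0 : 0 ≤ t - δ*s := by nlinarith
    have hveq : v = (t-δ*s)/c := hvdef.trans (max_eq_left (div_nonneg hw0 hcpos.le))
    have hid : s^2/2 + v^2/2 = s*t/(1+δ) + (s-t)^2/(2*c^2) := by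
      rw [hveq, div_pow, hc2]
      field_simp
      ring
    have hexp : t^2/(1+δ) + (s-t)*(t/2) ≤ s^2/2 + v^2/2 := by
      rw [hid]
      have e2 : ((s-t)*t)/2 ≤ ((s-t)*t)/(1+δ) :=
        div_le_div_of_nonneg_left (by nlinarith) hd1 (by linarith)
      have e3 : 0 ≤ (s-t)^2/(2*c^2) := by positivity
      have e4 : s*t/(1+δ) = t^2/(1+δ) + ((s-t)*t)/(1+δ) := by ring
      nlinarith
    have hE : Real.exp (-(s^2)/2) * Real.exp (-(v^2)/2)
        ≤ Real.exp (-(t^2/(1+δ)) - (s-t)*(t/2)) := by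
      rw [← Real.exp_add]
      apply Real.exp_le_exp.2
      linarith
    have hvge : (1-δ)*t/2 ≤ v := by
      rw [hveq]
      have : t - δ*s ≤ (t-δ*s)/c := by
        rw [le_div_iff₀ hcpos]; nlinarith
      linarith
    have hP : 4/(1+v) ≤ 64/(1-δ)^2/(1+t) := by
      rw [div_div, div_le_div_iff₀ h1v (by positivity)]
      nlinarith [sq_nonneg (1-δ)]
    calc Real.exp (-(s^2)/2) * (4 * Real.exp (-(v^2)/2) / (1+v))
        = (Real.exp (-(s^2)/2) * Real.exp (-(v^2)/2)) * (4/(1+v)) := by ring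
      _ ≤ Real.exp (-(t^2/(1+δ)) - (s-t)*(t/2)) * (64/(1-δ)^2/(1+t)) :=
          mul_le_mul hE hP (by positivity) (Real.exp_nonneg _)
      _ = 64/(1-δ)^2/(1+t) * (Real.exp (-(t^2)/(1+δ)) * Real.exp (-((s-t)*(t/2)))) := by
          rw [hrhs]; ring
  · -- case ii
    have hBig : t^2/(1+δ) + (s-t)*(t/2) + (1-δ)^2*t^2/8 ≤ s^2/2 + v^2/2 := by
      rcases le_or_gt 0 (t - δ*s) with hw0 | hw0
      · have hveq : v = (t-δ*s)/c := hvdef.trans (max_eq_left (div_nonneg hw0 hcpos.le))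
        have hid : s^2/2 + v^2/2 = s*t/(1+δ) + (s-t)^2/(2*c^2) := by
          rw [hveq, div_pow, hc2]; field_simp; ring
        have hst2 : (1-δ)*t/2 ≤ s - t := by nlinarith
        have hsq : ((1-δ)*t/2)^2 ≤ (s-t)^2 := by nlinarith
        have hcc : (s-t)^2/2 ≤ (s-t)^2/(2*c^2) := by
          apply div_le_div_of_nonneg_left (sq_nonneg _) (by positivity)
          nlinarith
        have e2 : ((s-t)*t)/2 ≤ ((s-t)*t)/(1+δ) :=
          div_le_div_of_nonneg_left (by nlinarith) hd1 (by linarith)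
        have e4 : s*t/(1+δ) = t^2/(1+δ) + ((s-t)*t)/(1+δ) := by ring
        nlinarith
      · have hveq : v = 0 := hvdef.trans (max_eq_right
          (div_nonpos_of_nonpos_of_nonneg (by linarith) hcpos.le))
        rw [hveq]
        have hds : t ≤ δ*s := by linarith
        have hs0 : (0:ℝ) < s := by linarith
        have hδpos : 0 < δ := by
          rcases lt_or_ge 0 δ with h | h
          · exact h
          · nlinarith
        have ha : 0 ≤ δ*s - t := by linarith
        have key : t^2/(1+δ) ≤ s^2/2 - (s-t)*(t/2) - (1-δ)^2*t^2/8 := by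
          rw [div_le_iff₀ hd1]
          nlinarith [mul_pos hδpos hδpos,
            mul_nonneg (mul_nonneg hd1.le ha) (by nlinarith : (0:ℝ) ≤ δ*s + (1-δ)*t),
            mul_nonneg (mul_nonneg (sq_nonneg t) h1d.le)
              (by nlinarith : (0:ℝ) ≤ 4+4*δ-5*δ^2+δ^4)]
        nlinarith
    have hE : Real.exp (-(s^2)/2) * Real.exp (-(v^2)/2)
        ≤ Real.exp (-((1-δ)^2*t^2/8)) * Real.exp (-(t^2/(1+δ)) - (s-t)*(t/2)) := by
      rw [← Real.exp_add, ← Real.exp_add]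
      apply Real.exp_le_exp.2
      linarith
    have hP : 4 * Real.exp (-((1-δ)^2*t^2/8)) ≤ 64/(1-δ)^2/(1+t) := by
      have hax : (1-δ)^2*t^2/8 + 1 ≤ Real.exp ((1-δ)^2*t^2/8) := Real.add_one_le_exp _
      have hpos : (0:ℝ) < (1-δ)^2*(1+t) := by positivity
      rw [div_div, Real.exp_neg,
        show 4 * (Real.exp ((1-δ)^2*t^2/8))⁻¹ = 4 / Real.exp ((1-δ)^2*t^2/8) from
          (div_eq_mul_inv 4 _).symm,
        div_le_div_iff₀ (Real.exp_pos _) hpos]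
      nlinarith [sq_nonneg (1-δ), sq_nonneg ((1-δ)*t),
        mul_nonneg (sq_nonneg (1-δ)) (mul_nonneg ht0.le (by linarith : (0:ℝ) ≤ t-1))]
    calc Real.exp (-(s^2)/2) * (4 * Real.exp (-(v^2)/2) / (1+v))
        = (Real.exp (-(s^2)/2) * Real.exp (-(v^2)/2)) * (4/(1+v)) := by ring
      _ ≤ (Real.exp (-((1-δ)^2*t^2/8)) * Real.exp (-(t^2/(1+δ)) - (s-t)*(t/2))) * 4 :=
          mul_le_mul hE (by
            apply div_le_self (by norm_num) (by linarith)) (by positivity)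
            (by positivity)
      _ = (4 * Real.exp (-((1-δ)^2*t^2/8))) * Real.exp (-(t^2/(1+δ)) - (s-t)*(t/2)) := by
          ring
      _ ≤ (64/(1-δ)^2/(1+t)) * Real.exp (-(t^2/(1+δ)) - (s-t)*(t/2)) :=
          mul_le_mul_of_nonneg_right hP (Real.exp_nonneg _)
      _ = 64/(1-δ)^2/(1+t) * (Real.exp (-(t^2)/(1+δ)) * Real.exp (-((s-t)*(t/2)))) := by
          rw [hrhs]

lemma expsq_deriv (x : ℝ) :
    HasDerivAt (fun y : ℝ => -Real.exp (-y^2/2)) (x * Real.exp (-x^2/2)) x := by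
  have h1 : HasDerivAt (fun y : ℝ => -y^2/2) (-x) x := by
    simpa [neg_div] using ((hasDerivAt_pow 2 x).div_const 2).fun_neg
  have := (h1.exp).fun_neg
  refine this.congr_deriv ?_
  ring

lemma expsq_tendsto : Tendsto (fun y : ℝ => -Real.exp (-y^2/2)) atTop (nhds 0) := by
  rw [show (0:ℝ) = -0 by norm_num]
  apply Tendsto.neg
  apply Real.tendsto_exp_atBot.comp
  apply Tendsto.atBot_div_const (by norm_num : (0:ℝ) < 2)
  apply tendsto_neg_atTop_atBot.comp
  exact tendsto_pow_atTop (by norm_num)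

lemma gint (w : ℝ) (hw : 0 < w) :
    ∫ x in Set.Ioi w, x * Real.exp (-x^2/2) = Real.exp (-w^2/2) := by
  have h := integral_Ioi_of_hasDerivAt_of_nonneg (g := fun y : ℝ => -Real.exp (-y^2/2))
    (g' := fun x : ℝ => x * Real.exp (-x^2/2)) (a := w) (l := 0)
    ((expsq_deriv w).continuousAt.continuousWithinAt)
    (fun x _ => expsq_deriv x)
    (fun x hx => mul_nonneg (le_of_lt (lt_trans hw hx)) (Real.exp_nonneg _))
    expsq_tendsto
  rw [h]; ring

lemma gint_integrable (w : ℝ) (hw : 0 < w) :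
    IntegrableOn (fun x : ℝ => x * Real.exp (-x^2/2)) (Set.Ioi w) :=
  integrableOn_Ioi_deriv_of_nonneg
    ((expsq_deriv w).continuousAt.continuousWithinAt)
    (fun x _ => expsq_deriv x)
    (fun x hx => mul_nonneg (le_of_lt (lt_trans hw hx)) (Real.exp_nonneg _))
    expsq_tendsto

lemma exp_integrable : Integrable (fun x : ℝ => Real.exp (-x^2/2)) := by
  have : (fun x : ℝ => Real.exp (-x^2/2)) = fun x : ℝ => Real.exp (-(1/2)*x^2) := by
    funext x; ring_nf
  rw [this]
  exact integrable_exp_neg_mul_sq (by norm_num)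

lemma tail1 (w : ℝ) (hw : 1 ≤ w) :
    ∫ x in Set.Ioi w, Real.exp (-x^2/2) ≤ Real.exp (-w^2/2)/w := by
  have hw0 : (0:ℝ) < w := by linarith
  have h1 : ∫ x in Set.Ioi w, Real.exp (-x^2/2)
      ≤ ∫ x in Set.Ioi w, (1/w) * (x * Real.exp (-x^2/2)) := by
    apply setIntegral_mono_on exp_integrable.integrableOn
      ((gint_integrable w hw0).const_mul (1/w)) measurableSet_Ioi
    intro x hx
    have hxw : w ≤ x := le_of_lt hx
    have hx1 : 1 ≤ x/w := (le_div_iff₀ hw0).2 (by linarith)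
    have := Real.exp_pos (-x^2/2)
    rw [show (1/w) * (x * Real.exp (-x^2/2)) = (x/w) * Real.exp (-x^2/2) by ring]
    nlinarith
  rw [integral_const_mul, gint w hw0] at h1
  rw [div_eq_inv_mul, ← one_div]; exact h1

lemma pdf_le (x : ℝ) : gaussianPDFReal 0 1 x ≤ (1/2) * Real.exp (-x^2/2) := by
  unfold gaussianPDFReal
  simp only [NNReal.coe_one, mul_one, sub_zero]
  have h4 : (4:ℝ) ≤ 2*Real.pi := by nlinarith [Real.pi_gt_three]
  have h2pi : (2:ℝ) ≤ Real.sqrt (2*Real.pi) := by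
    have h := Real.sqrt_le_sqrt h4
    rwa [show Real.sqrt 4 = 2 by
      rw [show (4:ℝ) = 2^2 by norm_num]; exact Real.sqrt_sq (by norm_num)] at h
  have h1 : (Real.sqrt (2*Real.pi))⁻¹ ≤ 1/2 := by
    rw [one_div]
    exact inv_anti₀ (by norm_num) h2pi
  exact mul_le_mul_of_nonneg_right h1 (Real.exp_nonneg _)

lemma pdf_even (x : ℝ) : gaussianPDFReal 0 1 (-x) = gaussianPDFReal 0 1 x := by
  unfold gaussianPDFReal
  norm_num

lemma tail_Ioi (w : ℝ) (hw : 1 ≤ w) :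
    ∫ x in Set.Ioi w, gaussianPDFReal 0 1 x ≤ (1/2) * (Real.exp (-w^2/2)/w) := by
  have h1 : ∫ x in Set.Ioi w, gaussianPDFReal 0 1 x
      ≤ ∫ x in Set.Ioi w, (1/2) * Real.exp (-x^2/2) := by
    apply setIntegral_mono_on (integrable_gaussianPDFReal 0 1).integrableOn
      (exp_integrable.const_mul (1/2)).integrableOn measurableSet_Ioi
    exact fun x _ => pdf_le x
  rw [integral_const_mul] at h1
  have h2 := tail1 w hw
  nlinarith

lemma tailg (w : ℝ) (hw : 0 ≤ w) :
    gaussianReal 0 1 {y : ℝ | w ≤ |y|} ≤ ENNReal.ofReal (4 * Real.exp (-w^2/2) / (1+w)) := by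
  have hexphalf : Real.exp (1/2) < 2 := by
    have h : Real.exp (1/2) * Real.exp (1/2) = Real.exp 1 := by
      rw [← Real.exp_add]; norm_num
    nlinarith [Real.exp_one_lt_d9, Real.exp_pos (1/2)]
  rcases le_or_gt w 1 with hw1 | hw1
  · -- trivial case
    calc gaussianReal 0 1 {y : ℝ | w ≤ |y|} ≤ 1 := prob_le_one
      _ = ENNReal.ofReal 1 := by simp
      _ ≤ ENNReal.ofReal (4 * Real.exp (-w^2/2) / (1+w)) := by
        apply ENNReal.ofReal_le_ofReal
        rw [le_div_iff₀ (by linarith : (0:ℝ) < 1+w)]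
        have h1 : Real.exp (-(1:ℝ)/2) ≤ Real.exp (-w^2/2) := by
          apply Real.exp_le_exp.2; nlinarith
        have h2 : (1:ℝ)/2 ≤ Real.exp (-(1:ℝ)/2) := by
          rw [show (-(1:ℝ)/2) = -(1/2) by norm_num, Real.exp_neg,
            le_inv_comm₀ (by norm_num) (Real.exp_pos _)]
          · linarith
        nlinarith
  · -- main case
    have hset : {y : ℝ | w ≤ |y|} = Set.Iic (-w) ∪ Set.Ici w := by
      ext y
      simp only [Set.mem_setOf_eq, Set.mem_union, Set.mem_Iic, Set.mem_Ici]
      rw [le_abs]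
      constructor
      · rintro (h | h); exacts [Or.inr h, Or.inl (by linarith)]
      · rintro (h | h); exacts [Or.inr (by linarith), Or.inl h]
    have hIoi : ∫ x in Set.Ioi w, gaussianPDFReal 0 1 x ≤ (1/2) * (Real.exp (-w^2/2)/w) :=
      tail_Ioi w hw1.le
    have hIci : gaussianReal 0 1 (Set.Ici w)
        ≤ ENNReal.ofReal ((1/2) * (Real.exp (-w^2/2)/w)) := by
      rw [gaussianReal_apply_eq_integral 0 one_ne_zero, integral_Ici_eq_integral_Ioi]
      exact ENNReal.ofReal_le_ofReal hIoi
    have hIic : gaussianReal 0 1 (Set.Iic (-w))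
        ≤ ENNReal.ofReal ((1/2) * (Real.exp (-w^2/2)/w)) := by
      rw [gaussianReal_apply_eq_integral 0 one_ne_zero]
      apply ENNReal.ofReal_le_ofReal
      have heq : ∫ x in Set.Iic (-w), gaussianPDFReal 0 1 x
          = ∫ x in Set.Ioi w, gaussianPDFReal 0 1 x := by
        rw [show Set.Iic (-w) = Set.Iic (-w) from rfl]
        have := integral_comp_neg_Iic (-w) (gaussianPDFReal 0 1)
        simp only [neg_neg] at this
        rw [← this]
        apply setIntegral_congr_fun measurableSet_Iic
        intro x _
        exact (pdf_even x).symm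
      rw [heq]; exact hIoi
    calc gaussianReal 0 1 {y : ℝ | w ≤ |y|}
        ≤ gaussianReal 0 1 (Set.Iic (-w)) + gaussianReal 0 1 (Set.Ici w) := by
          rw [hset]; exact measure_union_le _ _
      _ ≤ ENNReal.ofReal ((1/2) * (Real.exp (-w^2/2)/w))
          + ENNReal.ofReal ((1/2) * (Real.exp (-w^2/2)/w)) := add_le_add hIic hIci
      _ = ENNReal.ofReal (Real.exp (-w^2/2)/w) := by
          rw [← ENNReal.ofReal_add (by positivity) (by positivity)]
          congr 1; ring
      _ ≤ ENNReal.ofReal (4 * Real.exp (-w^2/2) / (1+w)) := by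
          apply ENNReal.ofReal_le_ofReal
          rw [div_le_div_iff₀ (by linarith) (by linarith)]
          nlinarith [Real.exp_pos (-w^2/2)]

lemma keypoly (δ r s t : ℝ) (h0r : 0 ≤ r) (hrδ : r ≤ δ) (hδ : δ < 1) (ht : 0 ≤ t)
    (hst : t ≤ s) (hds : 0 ≤ t - δ*s) :
    (1 - r^2) * (t - δ*s)^2 ≤ (1 - δ^2) * (t - r*s)^2 := by
  have hu : 0 ≤ s - t := sub_nonneg.2 hst
  have hδr : 0 ≤ δ - r := sub_nonneg.2 hrδ
  have h1δ : 0 ≤ 1 - δ := by linarith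
  have h1r : 0 ≤ 1 - r := by linarith
  nlinarith [mul_nonneg hds hu, mul_nonneg hδr hu, mul_nonneg hδr ht,
    mul_nonneg h1δ ht, mul_nonneg h1r ht, mul_nonneg hδr hds,
    mul_nonneg hu ht, sq_nonneg (s - t), mul_nonneg hds ht,
    mul_nonneg (mul_nonneg hδr hds) hu, mul_nonneg (mul_nonneg hδr hu) hu,
    mul_nonneg (mul_nonneg h1δ ht) (mul_nonneg h1δ ht),
    mul_nonneg (mul_nonneg hδr hu) (mul_nonneg h1δ ht),
    mul_nonneg (mul_nonneg hds hu) hδr, mul_nonneg (mul_nonneg hds ht) hδr,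
    mul_nonneg (mul_nonneg h1δ ht) (mul_nonneg hδr hu),
    mul_nonneg (mul_nonneg h1δ ht) (mul_nonneg h1r ht)]

lemma keymono (δ r s t Y : ℝ) (h0r : 0 ≤ r) (hrδ : r ≤ δ) (hδ : δ < 1) (ht : 0 ≤ t)
    (hst : t ≤ s) (hY0 : 0 ≤ Y) (hy : t - r*s ≤ Real.sqrt (1-r^2) * Y) :
    max ((t - δ*s)/Real.sqrt (1-δ^2)) 0 ≤ Y := by
  have hδ0 : 0 ≤ δ := le_trans h0r hrδ
  have hc2' : (0:ℝ) < 1 - δ^2 := by nlinarith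
  have hcρ2' : (0:ℝ) < 1 - r^2 := by nlinarith
  have hcpos : 0 < Real.sqrt (1-δ^2) := Real.sqrt_pos.2 hc2'
  have hcρpos : 0 < Real.sqrt (1-r^2) := Real.sqrt_pos.2 hcρ2'
  apply max_le _ hY0
  rcases le_or_gt (t - δ*s) 0 with hneg | hpos
  · exact le_trans (div_nonpos_of_nonpos_of_nonneg hneg hcpos.le) hY0
  · have hds : 0 ≤ t - δ*s := hpos.le
    have hrs : 0 ≤ t - r*s := by nlinarith
    have step1 : (t - δ*s)/Real.sqrt (1-δ^2) ≤ (t - r*s)/Real.sqrt (1-r^2) := by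
      rw [div_le_div_iff₀ hcpos hcρpos]
      have e1 : (t-δ*s) * Real.sqrt (1-r^2) = Real.sqrt ((1-r^2) * (t-δ*s)^2) := by
        rw [Real.sqrt_mul hcρ2'.le, Real.sqrt_sq hds, mul_comm]
      have e2 : (t-r*s) * Real.sqrt (1-δ^2) = Real.sqrt ((1-δ^2) * (t-r*s)^2) := by
        rw [Real.sqrt_mul hc2'.le, Real.sqrt_sq hrs, mul_comm]
      rw [e1, e2]
      exact Real.sqrt_le_sqrt (keypoly δ r s t h0r hrδ hδ ht hst hds)
    have step2 : (t - r*s)/Real.sqrt (1-r^2) ≤ Y := by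
      rw [div_le_iff₀ hcρpos]; linarith [hy]
    linarith

lemma expint (t : ℝ) (ht : 0 < t) :
    ∫ x in Set.Ioi t, Real.exp (-((x - t)*(t/2))) = 2/t := by
  have hderiv : ∀ x : ℝ, HasDerivAt (fun y : ℝ => -(2/t) * Real.exp (-((y - t)*(t/2))))
      (Real.exp (-((x - t)*(t/2)))) x := by
    intro x
    have h1 : HasDerivAt (fun y : ℝ => -((y - t)*(t/2))) (-(t/2)) x := by
      have := ((hasDerivAt_id x).sub_const t).mul_const (t/2)
      simpa using this.fun_neg
    have h2 := (h1.exp).const_mul (-(2/t))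
    refine h2.congr_deriv ?_
    field_simp
  have htends : Tendsto (fun y : ℝ => -(2/t) * Real.exp (-((y - t)*(t/2)))) atTop (nhds 0) := by
    rw [show (0:ℝ) = -(2/t) * 0 by ring]
    apply Tendsto.const_mul
    apply Real.tendsto_exp_atBot.comp
    apply tendsto_neg_atTop_atBot.comp
    apply Tendsto.atTop_mul_const (by positivity : (0:ℝ) < t/2)
    exact tendsto_atTop_add_const_right _ (-t) tendsto_id
  have h := integral_Ioi_of_hasDerivAt_of_nonneg (g := fun y : ℝ => -(2/t) * Real.exp (-((y - t)*(t/2))))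
    (g' := fun x : ℝ => Real.exp (-((x - t)*(t/2)))) (a := t) (l := 0)
    (hderiv t).continuousAt.continuousWithinAt
    (fun x _ => hderiv x)
    (fun x _ => Real.exp_nonneg _)
    htends
  rw [h]
  norm_num

lemma expint_integrable (t : ℝ) (ht : 0 < t) :
    IntegrableOn (fun x : ℝ => Real.exp (-((x - t)*(t/2)))) (Set.Ici t) := by
  rw [integrableOn_Ici_iff_integrableOn_Ioi]
  have h : (fun x : ℝ => Real.exp (-((x - t)*(t/2))))
      = fun x : ℝ => Real.exp (t*(t/2)) * Real.exp (-(t/2) * x) := by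
    funext x; rw [← Real.exp_add]; ring_nf
  rw [h]
  exact (exp_neg_integrableOn_Ioi t (by positivity)).const_mul _

end Aux

/-- For every `δ ∈ [0,1)` there exists a constant `C > 0` such that: if
`Z₁, Z₂` are independent standard normal random variables, `ρ ∈ [−δ, δ]`,
`W₁ = Z₁` and `W₂ = ρZ₁ + √(1−ρ²)Z₂`, then for all `t ≥ 0`,
`P(|W₁| ≥ t, |W₂| ≥ t) ≤ C (1+t)⁻² exp(−t²/(1+δ))`. -/
theorem stmt_6 (δ : ℝ) (hδ0 : 0 ≤ δ) (hδ1 : δ < 1) :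
    ∃ C : ℝ, 0 < C ∧
      ∀ (Ω : Type) [MeasureSpace Ω] [IsProbabilityMeasure (ℙ : Measure Ω)]
        (Z₁ Z₂ : Ω → ℝ), Measurable Z₁ → Measurable Z₂ →
        IndepFun Z₁ Z₂ ℙ →
        Measure.map Z₁ ℙ = gaussianReal 0 1 →
        Measure.map Z₂ ℙ = gaussianReal 0 1 →
        ∀ ρ : ℝ, -δ ≤ ρ → ρ ≤ δ →
        ∀ t : ℝ, 0 ≤ t →
          (ℙ {ω | t ≤ |Z₁ ω| ∧
              t ≤ |ρ * Z₁ ω + Real.sqrt (1 - ρ ^ 2) * Z₂ ω|}).toReal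
            ≤ C * ((1 + t) ^ 2)⁻¹ * Real.exp (-t ^ 2 / (1 + δ)) := by
  have h1d : (0:ℝ) < 1 - δ := by linarith
  have hCpos : (0:ℝ) < 512/(1-δ)^2 + 4*Real.exp 1 := by positivity
  refine ⟨512/(1-δ)^2 + 4*Real.exp 1, hCpos, ?_⟩
  intro Ω _ _ Z₁ Z₂ hZ₁ hZ₂ hind hm1 hm2 ρ hρl hρu t ht0
  have hd1 : (0:ℝ) < 1 + δ := by linarith
  rcases le_or_gt t 1 with ht1 | ht1
  · -- small t case
    have hPle : (ℙ {ω | t ≤ |Z₁ ω| ∧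
        t ≤ |ρ * Z₁ ω + Real.sqrt (1 - ρ ^ 2) * Z₂ ω|}).toReal ≤ 1 := by
      refine ENNReal.toReal_le_of_le_ofReal zero_le_one ?_
      rw [ENNReal.ofReal_one]; exact prob_le_one
    refine le_trans hPle ?_
    have e1 : Real.exp (-1:ℝ) ≤ Real.exp (-t^2/(1+δ)) := by
      apply Real.exp_le_exp.2
      have h2 : t^2/(1+δ) ≤ 1 := (div_le_one hd1).2 (by nlinarith)
      have h3 : -t^2/(1+δ) = -(t^2/(1+δ)) := by ring
      rw [h3]; linarith
    have e2 : (4:ℝ)⁻¹ ≤ ((1+t)^2)⁻¹ := by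
      apply inv_anti₀ (by positivity)
      nlinarith
    have hCge : 4*Real.exp 1 ≤ 512/(1-δ)^2 + 4*Real.exp 1 := by
      have : (0:ℝ) ≤ 512/(1-δ)^2 := by positivity
      linarith
    calc (1:ℝ) = (4*Real.exp 1) * (4:ℝ)⁻¹ * Real.exp (-1:ℝ) := by
          rw [Real.exp_neg]
          field_simp
      _ ≤ (512/(1-δ)^2 + 4*Real.exp 1) * ((1+t)^2)⁻¹ * Real.exp (-t^2/(1+δ)) := by
          apply mul_le_mul _ e1 (by positivity) (by positivity)
          apply mul_le_mul hCge e2 (by positivity) (by positivity)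
  · -- main case
    have ht1' : (1:ℝ) ≤ t := ht1.le
    have ht0' : (0:ℝ) < t := by linarith
    have hc2' : (0:ℝ) < 1 - δ^2 := by nlinarith
    set μ : Measure ℝ := gaussianReal 0 1 with hμ
    set cρ := Real.sqrt (1 - ρ^2) with hcρ
    set vf : ℝ → ℝ := fun x => max ((t - δ*|x|)/Real.sqrt (1-δ^2)) 0 with hvf
    have hvfcont : Continuous vf := by
      apply Continuous.max _ continuous_const
      exact (continuous_const.sub (continuous_const.mul continuous_abs)).div_const _
    have hvf0 : ∀ x, 0 ≤ vf x := fun x => le_max_right _ _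
    set S : Set (ℝ×ℝ) := {p | t ≤ |p.1| ∧ t ≤ |ρ*p.1 + cρ*p.2|} with hSdef
    set S' : Set (ℝ×ℝ) := {p | t ≤ |p.1| ∧ vf p.1 ≤ |p.2|} with hS'def
    have hS : MeasurableSet S := by
      rw [hSdef, Set.setOf_and]
      exact (measurableSet_le measurable_const measurable_fst.abs).inter
        (measurableSet_le measurable_const
          ((measurable_fst.const_mul ρ).add (measurable_snd.const_mul cρ)).abs)
    have hS' : MeasurableSet S' := by
      rw [hS'def, Set.setOf_and]
      exact (measurableSet_le measurable_const measurable_fst.abs).inter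
        (measurableSet_le ((hvfcont.measurable).comp measurable_fst) measurable_snd.abs)
    have hPE : ℙ {ω | t ≤ |Z₁ ω| ∧ t ≤ |ρ * Z₁ ω + cρ * Z₂ ω|} = (μ.prod μ) S := by
      have hmap : Measure.map (fun ω => (Z₁ ω, Z₂ ω)) ℙ = μ.prod μ := by
        rw [(indepFun_iff_map_prod_eq_prod_map_map hZ₁.aemeasurable
          hZ₂.aemeasurable).mp hind, hm1, hm2]
      rw [← hmap, Measure.map_apply (hZ₁.prodMk hZ₂) hS]
      rfl
    have habs : |ρ| ≤ δ := abs_le.mpr ⟨hρl, hρu⟩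
    have hsub : S ⊆ S' := by
      rintro ⟨x, y⟩ ⟨h1, h2⟩
      refine ⟨h1, ?_⟩
      have hcρ0 : (0:ℝ) ≤ cρ := by rw [hcρ]; exact Real.sqrt_nonneg _
      have hsq : Real.sqrt (1-|ρ|^2) = cρ := by rw [hcρ, sq_abs]
      have htr : t - |ρ| * |x| ≤ Real.sqrt (1-|ρ|^2) * |y| := by
        have habs2 : |ρ*x + cρ*y| ≤ |ρ| * |x| + cρ * |y| := by
          calc |ρ*x + cρ*y| ≤ |ρ*x| + |cρ*y| := abs_add_le _ _
            _ = |ρ| * |x| + cρ * |y| := by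
                rw [abs_mul, abs_mul, abs_of_nonneg hcρ0]
        rw [hsq]; simp only [Set.mem_setOf_eq] at h2; linarith
      exact keymono δ (|ρ|) (|x|) t (|y|) (abs_nonneg ρ) habs hδ1 ht0 h1 (abs_nonneg y) htr
    set F : ℝ → ℝ≥0∞ := fun x => Set.indicator {x : ℝ | t ≤ |x|}
      (fun x => ENNReal.ofReal (4 * Real.exp (-(vf x)^2/2) / (1 + vf x))) x with hF
    have hFmeas : Measurable F := by
      apply Measurable.indicator _ (measurableSet_le measurable_const measurable_abs)
      have hnum : Continuous fun x : ℝ => 4 * Real.exp (-(vf x)^2/2) :=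
        continuous_const.mul (Real.continuous_exp.comp (((hvfcont.pow 2).neg).div_const 2))
      have hden : Continuous fun x : ℝ => 1 + vf x := continuous_const.add hvfcont
      exact (ENNReal.continuous_ofReal.comp (hnum.div hden
        (fun x => ne_of_gt (by linarith [hvf0 x])))).measurable
    have hsec : ∀ x : ℝ, μ (Prod.mk x ⁻¹' S') ≤ F x := by
      intro x
      by_cases hx : t ≤ |x|
      · have heq : Prod.mk x ⁻¹' S' = {y : ℝ | vf x ≤ |y|} := by
          ext y; simp [hS'def, hx]
        have hFx : F x = ENNReal.ofReal (4 * Real.exp (-(vf x)^2/2) / (1 + vf x)) :=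
          Set.indicator_of_mem (show x ∈ {x : ℝ | t ≤ |x|} from hx) _
        rw [heq, hFx]
        exact tailg (vf x) (hvf0 x)
      · have heq : Prod.mk x ⁻¹' S' = ∅ := by
          ext y; simp [hS'def, hx]
        have hFx : F x = 0 :=
          Set.indicator_of_notMem (show x ∉ {x : ℝ | t ≤ |x|} from hx) _
        rw [heq, hFx]
        simp
    set KK := 64/(1-δ)^2/(1+t) * Real.exp (-t^2/(1+δ)) with hKK
    have hKK0 : (0:ℝ) ≤ KK := by positivity
    set G1 : ℝ → ℝ≥0∞ := fun x => ENNReal.ofReal (KK * Real.exp (-((x - t)*(t/2)))) with hG1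
    set G2 : ℝ → ℝ≥0∞ := fun x => ENNReal.ofReal (KK * Real.exp (-((-x - t)*(t/2)))) with hG2
    have hG1meas : Measurable G1 :=
      (ENNReal.continuous_ofReal.comp (continuous_const.mul (Real.continuous_exp.comp
        (((continuous_id.sub continuous_const).mul continuous_const).neg)))).measurable
    have hpoint : ∀ x : ℝ, (gaussianPDF 0 1 * F) x ≤
        Set.indicator (Set.Ici t) G1 x + Set.indicator (Set.Iic (-t)) G2 x := by
      intro x
      simp only [Pi.mul_apply]
      by_cases hx : t ≤ |x|
      · have hFx : F x = ENNReal.ofReal (4 * Real.exp (-(vf x)^2/2) / (1 + vf x)) :=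
          Set.indicator_of_mem (show x ∈ {x : ℝ | t ≤ |x|} from hx) _
        have hb : gaussianPDF 0 1 x * F x
            ≤ ENNReal.ofReal (KK * Real.exp (-((|x| - t)*(t/2)))) := by
          rw [hFx]
          rw [show gaussianPDF 0 1 x = ENNReal.ofReal (gaussianPDFReal 0 1 x) from rfl]
          rw [← ENNReal.ofReal_mul (gaussianPDFReal_nonneg 0 1 x)]
          apply ENNReal.ofReal_le_ofReal
          have hpdf := pdf_le x
          have hx2 : x^2 = |x|^2 := (sq_abs x).symm
          have hclaim := claimA δ t |x| hδ0 hδ1 ht1' hx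
          calc gaussianPDFReal 0 1 x * (4 * Real.exp (-(vf x)^2/2) / (1 + vf x))
              ≤ Real.exp (-(|x|^2)/2) * (4 * Real.exp (-(vf x)^2/2) / (1 + vf x)) := by
                apply mul_le_mul_of_nonneg_right _ (by positivity)
                rw [← hx2]
                nlinarith [Real.exp_pos (-x^2/2)]
            _ ≤ 64/(1-δ)^2/(1+t) * (Real.exp (-(t^2)/(1+δ))
                  * Real.exp (-((|x| - t)*(t/2)))) := hclaim
            _ = KK * Real.exp (-((|x| - t)*(t/2))) := by
                rw [hKK]; ring_nf
        rcases le_or_gt 0 x with hx0 | hx0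
        · have habsx : |x| = x := abs_of_nonneg hx0
          rw [habsx] at hb
          have hmem : x ∈ Set.Ici t := by rw [Set.mem_Ici, ← habsx]; exact hx
          rw [Set.indicator_of_mem hmem]
          exact le_trans hb le_self_add
        · have habsx : |x| = -x := abs_of_neg hx0
          rw [habsx] at hb
          have hmem : x ∈ Set.Iic (-t) := by
            rw [Set.mem_Iic]
            rw [habsx] at hx; linarith
          rw [Set.indicator_of_mem hmem]
          refine le_add_of_nonneg_of_le zero_le ?_
          exact hb
      · have hFx : F x = 0 :=
          Set.indicator_of_notMem (show x ∉ {x : ℝ | t ≤ |x|} from hx) _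
        rw [hFx, mul_zero]
        exact zero_le
    have hintexp : IntegrableOn (fun x : ℝ => KK * Real.exp (-((x - t)*(t/2))))
        (Set.Ioi t) := by
      apply Integrable.const_mul
      exact ((expint_integrable t ht0').mono_set Set.Ioi_subset_Ici_self)
    have hpiece1 : ∫⁻ x in Set.Ici t, G1 x ∂volume = ENNReal.ofReal (KK * (2/t)) := by
      rw [setLIntegral_congr (Filter.EventuallyEq.symm Ioi_ae_eq_Ici)]
      rw [hG1]
      rw [← ofReal_integral_eq_lintegral_ofReal hintexp
        (Filter.Eventually.of_forall (fun x => by positivity))]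
      rw [integral_const_mul, expint t ht0']
    have hneg : ∫⁻ x in Set.Iic (-t), G2 x ∂volume = ∫⁻ x in Set.Ici t, G1 x ∂volume := by
      have hG2meas : Measurable G2 :=
        (ENNReal.continuous_ofReal.comp (continuous_const.mul (Real.continuous_exp.comp
          (((continuous_id.neg.sub continuous_const).mul continuous_const).neg)))).measurable
      have hstep : ∫⁻ x in Set.Iic (-t), G2 x ∂volume
          = ∫⁻ x in Set.Ici t, G2 (-x) ∂volume := by
        conv_lhs => rw [show (volume : Measure ℝ) = Measure.map Neg.neg volume from
          (Measure.map_neg_eq_self volume).symm]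
        rw [setLIntegral_map measurableSet_Iic hG2meas measurable_neg]
        congr 1
        ext z; simp
      rw [hstep]
      apply setLIntegral_congr_fun measurableSet_Ici
      intro x _
      rw [hG1, hG2]
      norm_num
    have hchain : ℙ {ω | t ≤ |Z₁ ω| ∧ t ≤ |ρ * Z₁ ω + cρ * Z₂ ω|}
        ≤ ENNReal.ofReal (KK * (2/t) + KK * (2/t)) := by
      rw [hPE]
      calc (μ.prod μ) S ≤ (μ.prod μ) S' := measure_mono hsub
        _ = ∫⁻ x, μ (Prod.mk x ⁻¹' S') ∂μ := Measure.prod_apply hS'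
        _ ≤ ∫⁻ x, F x ∂μ := lintegral_mono hsec
        _ = ∫⁻ x, (gaussianPDF 0 1 * F) x ∂volume := by
            rw [hμ, gaussianReal_of_var_ne_zero 0 one_ne_zero]
            exact lintegral_withDensity_eq_lintegral_mul volume
              (measurable_gaussianPDF 0 1) hFmeas
        _ ≤ ∫⁻ x, (Set.indicator (Set.Ici t) G1 x
              + Set.indicator (Set.Iic (-t)) G2 x) ∂volume := lintegral_mono hpoint
        _ = (∫⁻ x in Set.Ici t, G1 x ∂volume) + (∫⁻ x in Set.Iic (-t), G2 x ∂volume) := by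
            rw [lintegral_add_left (hG1meas.indicator measurableSet_Ici)]
            rw [lintegral_indicator measurableSet_Ici, lintegral_indicator measurableSet_Iic]
        _ = ENNReal.ofReal (KK * (2/t)) + ENNReal.ofReal (KK * (2/t)) := by
            rw [hneg, hpiece1]
        _ = ENNReal.ofReal (KK * (2/t) + KK * (2/t)) := by
            rw [← ENNReal.ofReal_add (by positivity) (by positivity)]
    refine le_trans (ENNReal.toReal_le_of_le_ofReal (by positivity) hchain) ?_
    have hE := Real.exp_pos (-t^2/(1+δ))
    have e1 : KK * (2/t) + KK * (2/t)
        = 256/((1-δ)^2*(1+t)*t) * Real.exp (-t^2/(1+δ)) := by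
      rw [hKK]; field_simp; ring
    have key : 256/((1-δ)^2*(1+t)*t) ≤ 512/((1-δ)^2*(1+t)^2) := by
      rw [div_le_div_iff₀ (by positivity) (by positivity)]
      nlinarith [mul_nonneg (mul_nonneg (sq_nonneg (1-δ))
        (by linarith : (0:ℝ) ≤ 1+t)) (by linarith : (0:ℝ) ≤ t - 1),
        sq_nonneg ((1-δ)*(1+t))]
    have e2 : 512/((1-δ)^2*(1+t)^2) = 512/(1-δ)^2 * ((1+t)^2)⁻¹ := by
      field_simp
    have e3 : 512/(1-δ)^2 * ((1+t)^2)⁻¹ ≤ (512/(1-δ)^2 + 4*Real.exp 1) * ((1+t)^2)⁻¹ := by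
      apply mul_le_mul_of_nonneg_right _ (by positivity)
      have : (0:ℝ) < 4*Real.exp 1 := by positivity
      linarith
    rw [e1]
    calc 256/((1-δ)^2*(1+t)*t) * Real.exp (-t^2/(1+δ))
        ≤ (512/(1-δ)^2 * ((1+t)^2)⁻¹) * Real.exp (-t^2/(1+δ)) := by
          apply mul_le_mul_of_nonneg_right _ hE.le
          rw [← e2]; exact key
      _ ≤ (512/(1-δ)^2 + 4*Real.exp 1) * ((1+t)^2)⁻¹ * Real.exp (-t^2/(1+δ)) :=
          mul_le_mul_of_nonneg_right e3 hE.le
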